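/- Let τ ≥ 1 be an integer and 0 < κ ≤ 1. Let B = (B_1, …, B_K) be a blockade in a graph G. Then there is an equicardinal (κ, τ)-support-invariant contraction B' = (B_1', …, B_K') of B whose width is at least κ^{2^K · τ^τ} times the width of B. -/

import Mathlib

open Finset

open scoped Classical

variable {V : Type*}

/-- No edges between `A` and `B`. -/
def Anticomplete (G : SimpleGraph V) (A B : Finset V) : Prop :=
  ∀ a ∈ A, ∀ b ∈ B, ¬ G.Adj a b

/-- All edges between `A` and `B` are present. -/
def CompletePair (G : SimpleGraph V) (A B : Finset V) : Prop :=
  ∀ a ∈ A, ∀ b ∈ B, G.Adj a b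

/-- `G` is `ε`-coherent. -/
def Coherent (G : SimpleGraph V) [Fintype V] (ε : ℝ) : Prop :=
  1 < Fintype.card V ∧
  (∀ v : V, (G.degree v : ℝ) < ε * Fintype.card V) ∧
  ¬ ∃ A B : Finset V, Disjoint A B ∧ Anticomplete G A B ∧
      ε * Fintype.card V ≤ A.card ∧ ε * Fintype.card V ≤ B.card

/-- `G` contains an induced copy of `H`. -/
def Contains {W : Type*} (G : SimpleGraph V) (H : SimpleGraph W) : Prop :=
  ∃ f : W ↪ V, ∀ a b, G.Adj (f a) (f b) ↔ H.Adj a b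

/-- Size of the largest clique. -/
noncomputable def cliqueNumber (G : SimpleGraph V) [Fintype V] : ℕ :=
  sSup {n | ∃ s : Finset V, G.IsNClique n s}

/-- A blockade: pairwise disjoint nonempty blocks. -/
def IsBlockade {K : ℕ} (B : Fin K → Finset V) : Prop :=
  (∀ i, (B i).Nonempty) ∧ Pairwise fun i j => Disjoint (B i) (B j)

/-- Width of a blockade: minimum block size. -/
noncomputable def blockWidth {K : ℕ} (B : Fin K → Finset V) : ℕ :=
  ⨅ i, (B i).card

/-- A rainbow copy of the ordered graph `J` with blocks given by the strictly
monotone map `ι`. -/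
def RainbowCopy (G : SimpleGraph V) {K : ℕ} (B : Fin K → Finset V) {m : ℕ}
    (J : SimpleGraph (Fin m)) (ι : Fin m → Fin K) : Prop :=
  StrictMono ι ∧ ∃ f : Fin m → V, (∀ a, f a ∈ B (ι a)) ∧
    ∀ a b, G.Adj (f a) (f b) ↔ J.Adj a b

/-- The trace of the ordered graph `J` relative to a blockade. -/
def Trace (G : SimpleGraph V) {K : ℕ} (B : Fin K → Finset V) {m : ℕ}
    (J : SimpleGraph (Fin m)) : Set (Fin m → Fin K) :=
  {ι | RainbowCopy G B J ι}

/-- `τ`-support-uniform: for every ordered tree with at most `τ` vertices, the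
trace is empty or everything. -/
def SupportUniform (G : SimpleGraph V) {K : ℕ} (B : Fin K → Finset V) (τ : ℕ) : Prop :=
  ∀ m : ℕ, m ≤ τ → ∀ J : SimpleGraph (Fin m), J.IsTree →
    Trace G B J = ∅ ∨ Trace G B J = {ι | StrictMono ι}

/-- `B'` is a contraction of `B`. -/
def IsContraction {K : ℕ} (B' B : Fin K → Finset V) : Prop :=
  ∀ i, (B' i).Nonempty ∧ B' i ⊆ B i

/-- `(κ, τ)`-support-invariant: contractions of width at least `κ` times the
width have the same traces of ordered trees with at most `τ` vertices. -/
def SupportInvariant (G : SimpleGraph V) {K : ℕ} (B : Fin K → Finset V)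
    (κ : ℝ) (τ : ℕ) : Prop :=
  ∀ B' : Fin K → Finset V, IsContraction B' B →
    (∀ i, κ * blockWidth B ≤ ((B' i).card : ℝ)) →
    ∀ m : ℕ, m ≤ τ → ∀ J : SimpleGraph (Fin m), J.IsTree →
      Trace G B' J = Trace G B J

/-- `X` `lam`-covers the block `Bi` (with respect to width `w`). -/
def Covers (G : SimpleGraph V) (X Bi : Finset V) (lam : ℝ) (w : ℕ) : Prop :=
  lam * w ≤ ((Bi.filter fun v => ∃ x ∈ X, G.Adj x v).card : ℝ)

/-- `X` `lam`-misses the block `Bi` (with respect to width `w`). -/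
def Misses (G : SimpleGraph V) (X Bi : Finset V) (lam : ℝ) (w : ℕ) : Prop :=
  lam * w ≤ ((Bi.filter fun v => ∀ x ∈ X, ¬ G.Adj x v).card : ℝ)

/-- `lam`-concave (for an equicardinal blockade of width `w`). -/
def Concave (G : SimpleGraph V) {K : ℕ} (B : Fin K → Finset V) (lam : ℝ) (w : ℕ) : Prop :=
  ∀ h1 h2 h3 : Fin K, h1 < h2 → h2 < h3 →
    ∀ X : Finset V,
      (∀ x ∈ X, ∃ i : Fin K, i ≠ h1 ∧ i ≠ h2 ∧ i ≠ h3 ∧ x ∈ B i) →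
      ¬ (Covers G X (B h2) lam w ∧ Misses G X (B h1) lam w ∧ Misses G X (B h3) lam w)

/-- `G` contains a `B`-rainbow induced copy of `T`. -/
def RainbowContains (G : SimpleGraph V) {K : ℕ} (B : Fin K → Finset V)
    {W' : Type*} (T : SimpleGraph W') : Prop :=
  ∃ f : W' ↪ V,
    (∀ a b, G.Adj (f a) (f b) ↔ T.Adj a b) ∧
    (∀ a, ∃ i, f a ∈ B i) ∧
    ∀ a b, a ≠ b → ∀ i, f a ∈ B i → f b ∉ B i

/-- Vertices of the tree `T(δ, η)`: sequences of length at most `η` over `Fin δ`. -/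
def Tvert (δ η : ℕ) : Type := {l : List (Fin δ) // l.length ≤ η}

/-- The tree `T(δ, η)` rooted at the empty sequence: every vertex of depth
`< η` has exactly `δ` children, and all leaves are at depth exactly `η`. -/
def Ttree (δ η : ℕ) : SimpleGraph (Tvert δ η) :=
  SimpleGraph.fromRel fun a b => ∃ x : Fin δ, b.1 = x :: a.1


/-! ### Auxiliary machinery -/

section AuxTree

/-- Canonical "second vertex of the path from `v` to `r`" function. -/
noncomputable def treeParent {m : ℕ} (J : SimpleGraph (Fin m)) (r v : Fin m) : Fin m :=
  if h : ∃ p : J.Walk v r, p.IsPath then (Classical.choose h).getVert 1 else v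

lemma treeParent_eq_getVert {m : ℕ} {J : SimpleGraph (Fin m)} (hJ : J.IsTree)
    (r v : Fin m) (q : J.Walk v r) (hq : q.IsPath) :
    treeParent J r v = q.getVert 1 := by
  have h : ∃ p : J.Walk v r, p.IsPath := ⟨q, hq⟩
  rw [treeParent, dif_pos h]
  have := (hJ.existsUnique_path v r).unique (Classical.choose_spec h) hq
  rw [this]

lemma adj_iff_treeParent {m : ℕ} {J : SimpleGraph (Fin m)} (hJ : J.IsTree)
    (r a b : Fin m) :
    J.Adj a b ↔ a ≠ b ∧ (treeParent J r a = b ∨ treeParent J r b = a) := by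
  have claim : ∀ x y : Fin m, x ≠ y → treeParent J r x = y → J.Adj x y := by
    intro x y hxy hpar
    obtain ⟨p, hp, -⟩ := hJ.existsUnique_path x r
    rw [treeParent_eq_getVert hJ r x p hp] at hpar
    by_cases hl : p.length = 0
    · exfalso
      have hxr : x = r := SimpleGraph.Walk.eq_of_length_eq_zero hl
      have : p.getVert 1 = r := p.getVert_of_length_le (by omega)
      exact hxy (by rw [hxr, ← this, hpar])
    · have h0 := p.adj_getVert_succ (i := 0) (Nat.pos_of_ne_zero hl)
      rwa [p.getVert_zero, hpar] at h0
  constructor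
  · intro hadj
    refine ⟨hadj.ne, ?_⟩
    obtain ⟨p, hp, -⟩ := hJ.existsUnique_path a r
    by_cases hb : b ∈ p.support
    · left
      rw [treeParent_eq_getVert hJ r a p hp]
      have h1 : p.takeUntil b hb = SimpleGraph.Walk.cons hadj SimpleGraph.Walk.nil := by
        refine (hJ.existsUnique_path a b).unique (hp.takeUntil hb) ?_
        simp [SimpleGraph.Walk.cons_isPath_iff, hadj.ne]
      have h2 := p.take_spec hb
      rw [← h2, h1]
      simp
    · right
      rw [treeParent_eq_getVert hJ r b (SimpleGraph.Walk.cons hadj.symm p) (hp.cons hb)]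
      simp
  · rintro ⟨hne, h | h⟩
    · exact claim a b hne h
    · exact (claim b a hne.symm h).symm

lemma tree_eq_of_treeParent_eq {m : ℕ} {J1 J2 : SimpleGraph (Fin m)}
    (h1 : J1.IsTree) (h2 : J2.IsTree) (r : Fin m)
    (h : treeParent J1 r = treeParent J2 r) : J1 = J2 := by
  ext a b
  rw [adj_iff_treeParent h1 r, adj_iff_treeParent h2 r, h]

end AuxTree

section AuxTrace

lemma trace_mono (G : SimpleGraph V) {K : ℕ} {B' B : Fin K → Finset V}
    (h : ∀ i, B' i ⊆ B i) {m : ℕ} (J : SimpleGraph (Fin m)) :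
    Trace G B' J ⊆ Trace G B J := by
  rintro ι ⟨hs, f, hf, hadj⟩
  exact ⟨hs, f, fun a => h _ (hf a), hadj⟩

/-- The set of all ordered-tree trace elements of a blockade. -/
def traceSet (G : SimpleGraph V) (τ : ℕ) {K : ℕ} (B : Fin K → Finset V) :
    Set (Σ m : Fin (τ + 1), SimpleGraph (Fin (m : ℕ)) × (Fin (m : ℕ) → Fin K)) :=
  {x | x.2.1.IsTree ∧ x.2.2 ∈ Trace G B x.2.1}

lemma traceSet_mono (G : SimpleGraph V) (τ : ℕ) {K : ℕ} {B' B : Fin K → Finset V}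
    (h : ∀ i, B' i ⊆ B i) : traceSet G τ B' ⊆ traceSet G τ B := by
  rintro ⟨m, J, ι⟩ ⟨hT, hι⟩
  exact ⟨hT, trace_mono G h J hι⟩

/-- Encoding of a trace element. -/
noncomputable def encTrace {K τ : ℕ}
    (x : Σ m : Fin (τ + 1), SimpleGraph (Fin (m : ℕ)) × (Fin (m : ℕ) → Fin K)) :
    (Fin K → Bool) × (Fin τ → Fin τ) :=
  (fun i => decide (i ∈ Set.range x.2.2),
   fun i => if h : (i : ℕ) < (x.1 : ℕ) then
      ⟨(treeParent x.2.1 ⟨0, Nat.lt_of_le_of_lt (Nat.zero_le _) h⟩ ⟨i.1, h⟩).1,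
        Nat.lt_of_lt_of_le (Fin.isLt _) (Nat.lt_succ_iff.mp x.1.isLt)⟩
    else i)

lemma encTrace_injOn (G : SimpleGraph V) (τ : ℕ) {K : ℕ} (B : Fin K → Finset V) :
    Set.InjOn encTrace (traceSet G τ B) := by
  rintro ⟨⟨m1, hm1⟩, J1, ι1⟩ ⟨hT1, hmono1, -⟩ ⟨⟨m2, hm2⟩, J2, ι2⟩ ⟨hT2, hmono2, -⟩ hxy
  have h1 := congrArg Prod.fst hxy
  have h2 := congrArg Prod.snd hxy
  simp only [encTrace] at h1 h2
  have hrange : Set.range ι1 = Set.range ι2 := by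
    ext i
    have := congrFun h1 i
    simpa using this
  have hm : m1 = m2 := by
    have c1 : Nat.card (Set.range ι1) = m1 := by
      rw [Nat.card_range_of_injective hmono1.injective]; simp
    have c2 : Nat.card (Set.range ι2) = m2 := by
      rw [Nat.card_range_of_injective hmono2.injective]; simp
    rw [← c1, ← c2, hrange]
  subst hm
  have hι : ι1 = ι2 := (StrictMono.range_inj hmono1 hmono2).mp hrange
  subst hι
  have hmpos : 0 < m1 := Fin.pos_iff_nonempty.mpr hT1.isConnected.nonempty
  have hmτ : m1 ≤ τ := Nat.lt_succ_iff.mp hm1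
  have hJ : J1 = J2 := by
    apply tree_eq_of_treeParent_eq hT1 hT2 ⟨0, hmpos⟩
    funext v
    have hvτ : (v : ℕ) < τ := Nat.lt_of_lt_of_le v.isLt hmτ
    have hv : ((⟨(v : ℕ), hvτ⟩ : Fin τ) : ℕ) < m1 := v.isLt
    have := congrFun h2 ⟨(v : ℕ), hvτ⟩
    rw [dif_pos hv, dif_pos hv, Fin.mk.injEq] at this
    exact Fin.ext (by simpa [Fin.eta] using this)
  subst hJ
  rfl

set_option synthInstance.maxHeartbeats 1000000 in
lemma traceSet_ncard_le (G : SimpleGraph V) (τ : ℕ) {K : ℕ} (B : Fin K → Finset V) :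
    (traceSet G τ B).ncard ≤ 2 ^ K * τ ^ τ := by
  calc (traceSet G τ B).ncard = (encTrace '' traceSet G τ B).ncard :=
        (Set.ncard_image_of_injOn (encTrace_injOn G τ B)).symm
    _ ≤ (Set.univ : Set ((Fin K → Bool) × (Fin τ → Fin τ))).ncard :=
        Set.ncard_le_ncard (Set.subset_univ _) Set.finite_univ
    _ = 2 ^ K * τ ^ τ := by
        rw [Set.ncard_univ, Nat.card_eq_fintype_card]
        simp [Fintype.card_fun]

end AuxTrace

section AuxDescend

lemma descend_aux (G : SimpleGraph V) (τ : ℕ) (κ : ℝ) (hκ0 : 0 < κ) (hκ1 : κ ≤ 1)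
    {K : ℕ} (hK : 0 < K) :
    ∀ n : ℕ, ∀ B0 : Fin K → Finset V, IsBlockade B0 →
      (∀ i j, (B0 i).card = (B0 j).card) → (traceSet G τ B0).ncard ≤ n →
      ∃ B' : Fin K → Finset V, IsContraction B' B0 ∧
        (∀ i j, (B' i).card = (B' j).card) ∧ SupportInvariant G B' κ τ ∧
        κ ^ n * (blockWidth B0 : ℝ) ≤ (blockWidth B' : ℝ) := by
  haveI : Nonempty (Fin K) := ⟨⟨0, hK⟩⟩
  intro n
  induction n with
  | zero =>
    intro B0 hB0 hB0eq hn
    by_cases hSI : SupportInvariant G B0 κ τ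
    · refine ⟨B0, fun i => ⟨hB0.1 i, subset_rfl⟩, hB0eq, hSI, by simp⟩
    · exfalso
      unfold SupportInvariant at hSI
      push_neg at hSI
      obtain ⟨B1, hB1con, hB1w, m, hmτ, J, hJtree, hne⟩ := hSI
      have hsub : Trace G B1 J ⊆ Trace G B0 J := trace_mono G (fun i => (hB1con i).2) J
      obtain ⟨ι, hι0, hι1⟩ := Set.exists_of_ssubset
        (show Trace G B1 J ⊂ Trace G B0 J from ⟨hsub, fun h => hne (hsub.antisymm h)⟩)
      have hx0 : (⟨⟨m, Nat.lt_succ_of_le hmτ⟩, J, ι⟩ :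
          Σ m : Fin (τ + 1), SimpleGraph (Fin (m : ℕ)) × (Fin (m : ℕ) → Fin K)) ∈
          traceSet G τ B0 := ⟨hJtree, hι0⟩
      have := Set.ncard_eq_zero (Set.toFinite _) |>.mp (Nat.le_zero.mp hn)
      rw [this] at hx0
      exact hx0
  | succ n ih =>
    intro B0 hB0 hB0eq hn
    by_cases hSI : SupportInvariant G B0 κ τ
    · refine ⟨B0, fun i => ⟨hB0.1 i, subset_rfl⟩, hB0eq, hSI, ?_⟩
      have h1 : κ ^ (n + 1) ≤ 1 := pow_le_one₀ hκ0.le hκ1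
      calc κ ^ (n + 1) * (blockWidth B0 : ℝ) ≤ 1 * (blockWidth B0 : ℝ) :=
            mul_le_mul_of_nonneg_right h1 (Nat.cast_nonneg _)
        _ = (blockWidth B0 : ℝ) := one_mul _
    · unfold SupportInvariant at hSI
      push_neg at hSI
      obtain ⟨B1, hB1con, hB1w, m, hmτ, J, hJtree, hne⟩ := hSI
      have hsub : Trace G B1 J ⊆ Trace G B0 J := trace_mono G (fun i => (hB1con i).2) J
      obtain ⟨ι, hι0, hι1⟩ := Set.exists_of_ssubset
        (show Trace G B1 J ⊂ Trace G B0 J from ⟨hsub, fun h => hne (hsub.antisymm h)⟩)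
      have hstrict : traceSet G τ B1 ⊂ traceSet G τ B0 := by
        refine ⟨traceSet_mono G τ (fun i => (hB1con i).2), fun hss => hι1 ?_⟩
        have hx0 : (⟨⟨m, Nat.lt_succ_of_le hmτ⟩, J, ι⟩ :
            Σ m : Fin (τ + 1), SimpleGraph (Fin (m : ℕ)) × (Fin (m : ℕ) → Fin K)) ∈
            traceSet G τ B0 := ⟨hJtree, hι0⟩
        exact (hss hx0).2
      have hcard : (traceSet G τ B1).ncard < (traceSet G τ B0).ncard :=
        Set.ncard_lt_ncard hstrict (Set.toFinite _)
      have hB1blockade : IsBlockade B1 :=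
        ⟨fun i => (hB1con i).1, fun i j hij => (hB0.2 hij).mono (hB1con i).2 (hB1con j).2⟩
      have hw1le : ∀ i, blockWidth B1 ≤ (B1 i).card :=
        fun i => ciInf_le (OrderBot.bddBelow _) i
      have hκw1 : κ * (blockWidth B0 : ℝ) ≤ (blockWidth B1 : ℝ) := by
        obtain ⟨i0, hi0⟩ := exists_eq_ciInf_of_finite (f := fun i => (B1 i).card)
        have hbw : blockWidth B1 = (B1 i0).card := hi0.symm
        rw [hbw]
        exact hB1w i0
      choose B2 hB2sub hB2card using fun i => Finset.exists_subset_card_eq (hw1le i)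
      have hw1pos : 0 < blockWidth B1 :=
        Nat.lt_of_succ_le (le_ciInf fun i => Finset.card_pos.2 (hB1blockade.1 i))
      have hB2blockade : IsBlockade B2 :=
        ⟨fun i => Finset.card_pos.1 (by rw [hB2card i]; exact hw1pos),
         fun i j hij => (hB1blockade.2 hij).mono (hB2sub i) (hB2sub j)⟩
      have hB2eq : ∀ i j, (B2 i).card = (B2 j).card := fun i j => by
        rw [hB2card, hB2card]
      have hB2w : blockWidth B2 = blockWidth B1 := by
        unfold blockWidth
        rw [show (fun i => (B2 i).card) = fun _ => blockWidth B1 from funext hB2card]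
        exact ciInf_const
      have hB2n : (traceSet G τ B2).ncard ≤ n := by
        have := Set.ncard_le_ncard (traceSet_mono G τ hB2sub) (Set.toFinite _)
        omega
      obtain ⟨B', hcon, heq, hSI', hwbound⟩ := ih B2 hB2blockade hB2eq hB2n
      refine ⟨B', fun i => ⟨(hcon i).1, (hcon i).2.trans ((hB2sub i).trans (hB1con i).2)⟩,
        heq, hSI', ?_⟩
      calc κ ^ (n + 1) * (blockWidth B0 : ℝ) = κ ^ n * (κ * (blockWidth B0 : ℝ)) := by ring
        _ ≤ κ ^ n * (blockWidth B1 : ℝ) :=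
            mul_le_mul_of_nonneg_left hκw1 (pow_nonneg hκ0.le n)
        _ = κ ^ n * (blockWidth B2 : ℝ) := by rw [hB2w]
        _ ≤ (blockWidth B' : ℝ) := hwbound

end AuxDescend

theorem stmt7 {V : Type*} (G : SimpleGraph V) (τ : ℕ) (hτ : 1 ≤ τ)
    (κ : ℝ) (hκ0 : 0 < κ) (hκ1 : κ ≤ 1) {K : ℕ} (B : Fin K → Finset V)
    (hB : IsBlockade B) :
    ∃ B' : Fin K → Finset V, IsContraction B' B ∧
      (∀ i j, (B' i).card = (B' j).card) ∧
      SupportInvariant G B' κ τ ∧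
      κ ^ (2 ^ K * τ ^ τ) * (blockWidth B : ℝ) ≤ (blockWidth B' : ℝ) := by
  rcases Nat.eq_zero_or_pos K with hK | hK
  · subst hK
    refine ⟨B, fun i => i.elim0, fun i => i.elim0, ?_, ?_⟩
    · intro B'' _ _ m _ J hJtree
      have hmpos : 0 < m := Fin.pos_iff_nonempty.mpr hJtree.isConnected.nonempty
      ext ι
      exact (ι ⟨0, hmpos⟩).elim0
    · have hw : blockWidth B = 0 := by
        simp [blockWidth, iInf]
      simp [hw]
  · haveI : Nonempty (Fin K) := ⟨⟨0, hK⟩⟩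
    have hwle : ∀ i, blockWidth B ≤ (B i).card := fun i => ciInf_le (OrderBot.bddBelow _) i
    choose B0 hB0sub hB0card using fun i => Finset.exists_subset_card_eq (hwle i)
    have hwpos : 0 < blockWidth B := Nat.lt_of_succ_le (le_ciInf fun i => Finset.card_pos.2 (hB.1 i))
    have hB0blockade : IsBlockade B0 :=
      ⟨fun i => Finset.card_pos.1 (by rw [hB0card i]; exact hwpos),
       fun i j hij => (hB.2 hij).mono (hB0sub i) (hB0sub j)⟩
    have hB0eq : ∀ i j, (B0 i).card = (B0 j).card := fun i j => by rw [hB0card, hB0card]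
    have hB0w : blockWidth B0 = blockWidth B := by
      unfold blockWidth
      rw [show (fun i => (B0 i).card) = fun _ => blockWidth B from funext hB0card]
      exact ciInf_const
    obtain ⟨B', hcon, heq, hSI', hwbound⟩ := descend_aux G τ κ hκ0 hκ1 hK
      (2 ^ K * τ ^ τ) B0 hB0blockade hB0eq (traceSet_ncard_le G τ B0)
    refine ⟨B', fun i => ⟨(hcon i).1, (hcon i).2.trans (hB0sub i)⟩, heq, hSI', ?_⟩
    rw [← hB0w]
    exact hwbound
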